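/- For every condition s ∈ R and every ordinal p < ω₂ there exists a condition r ∈ R with r ≤_R s and p ∈ Aᵣ; indeed r = ((Aₛ ∪ {p}, <ₛ), Bₛ, Cₛ, Fₛ) is such a condition. -/
import Mathlib


open Cardinal Set

noncomputable section

/-- A partial function from ordinals to ordinals, represented by its graph. -/
abbrev ColFun := Set (Ordinal × Ordinal)

/-- `q ∈ Col(X)`: `q` is (the graph of) a function whose domain is an ordinal `< ω₁`
and whose range is a subset of `X`. -/
def IsColFun (X : Set Ordinal) (q : ColFun) : Prop :=
  (∀ a b b', (a, b) ∈ q → (a, b') ∈ q → b = b') ∧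
  (∃ δ : Ordinal, δ < (aleph 1).ord ∧ ∀ a : Ordinal, (∃ b, (a, b) ∈ q) ↔ a < δ) ∧
  (∀ a b, (a, b) ∈ q → b ∈ X)

/-- A quadruple `((A, <), B, C, F)`; `F` is a partial function represented by its graph. -/
structure Quad where
  A : Set Ordinal
  lt : Ordinal → Ordinal → Prop
  B : Set (Ordinal × ColFun)
  C : Set (ℕ → Ordinal)
  F : Set ((ℕ → Ordinal) × (Ordinal × ColFun) × ℕ)

namespace Quad

/-- `x ≤ᵣ y`. -/
def leR (r : Quad) (x y : Ordinal) : Prop := r.lt x y ∨ x = y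

/-- `x ⊥ᵣ y`: no `z ∈ Aᵣ` with `z ≤ᵣ x` and `z ≤ᵣ y`. -/
def Incomp (r : Quad) (x y : Ordinal) : Prop := ¬ ∃ z ∈ r.A, r.leR z x ∧ r.leR z y

/-- `r` is a forcing condition. -/
def IsCond (r : Quad) : Prop :=
  -- (1) A is a countable set of ordinals < ω₂
  r.A.Countable ∧
  (∀ a ∈ r.A, a < (aleph 2).ord) ∧
  -- (2) <ᵣ is a strict partial order on A
  (∀ a b, r.lt a b → a ∈ r.A ∧ b ∈ r.A) ∧
  (∀ a b c, r.lt a b → r.lt b c → r.lt a c) ∧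
  -- (3) b <ᵣ a implies a < b (whence <ᵣ is irreflexive and asymmetric)
  (∀ a b, r.lt b a → a < b) ∧
  -- (4) B is a countable subset of A × Col(A) with p ∈ range q for (p,q) ∈ B
  r.B.Countable ∧
  (∀ pq ∈ r.B, pq.1 ∈ r.A ∧ IsColFun r.A pq.2 ∧ ∃ α, (α, pq.1) ∈ pq.2) ∧
  -- (5) C is a countable set of <ᵣ-descending sequences in A without lower bound
  r.C.Countable ∧
  (∀ a ∈ r.C, (∀ n, a n ∈ r.A) ∧ (∀ n, r.lt (a (n + 1)) (a n)) ∧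
    ¬ ∃ z ∈ r.A, ∀ n, r.leR z (a n)) ∧
  -- (6) F is a (partial) function whose domain consists exactly of the pairs
  -- (⟨aₙ⟩, (p,q)) with ⟨aₙ⟩ ∈ C, (p,q) ∈ B, p ≥ a₀, satisfying (*)
  (∀ x ∈ r.F, x.1 ∈ r.C ∧ x.2.1 ∈ r.B ∧ x.1 0 ≤ x.2.1.1) ∧
  (∀ a pq, a ∈ r.C → pq ∈ r.B → a 0 ≤ pq.1 → ∃! m : ℕ, (a, pq, m) ∈ r.F) ∧
  (∀ a pq m, (a, pq, m) ∈ r.F →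
    ∀ p'q' ∈ r.B, r.leR p'q'.1 pq.1 → pq.2 ⊆ p'q'.2 →
      r.lt p'q'.1 (a m) → ∃ k, r.Incomp p'q'.1 (a k))

/-- `Ext r s`: `r ≤_R s`, i.e. `r` is stronger than `s`. -/
def Ext (r s : Quad) : Prop :=
  s.A ⊆ r.A ∧
  (∀ a ∈ s.A, ∀ b ∈ s.A, (r.lt a b ↔ s.lt a b)) ∧
  (∀ a ∈ s.A, ∀ b ∈ s.A, (r.Incomp a b ↔ s.Incomp a b)) ∧
  s.B ⊆ r.B ∧ s.C ⊆ r.C ∧ s.F ⊆ r.F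

end Quad

open Quad in
/-- For every condition `s` and ordinal `p < ω₂` there is a stronger condition whose
first component contains `p`; indeed `((Aₛ ∪ {p}, <ₛ), Bₛ, Cₛ, Fₛ)` is such a condition. -/
theorem stmt2 (s : Quad) (hs : s.IsCond) (p : Ordinal) (hp : p < (aleph 2).ord) :
    (∃ r : Quad, r.IsCond ∧ Ext r s ∧ p ∈ r.A) ∧
    (Quad.mk (insert p s.A) s.lt s.B s.C s.F).IsCond ∧
    Ext (Quad.mk (insert p s.A) s.lt s.B s.C s.F) s ∧
    p ∈ (Quad.mk (insert p s.A) s.lt s.B s.C s.F).A := by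

  obtain ⟨h1, h2, h3, h4, h5, h6, h7, h8, h9, h10, h11, h12⟩ := hs
  set r : Quad := Quad.mk (insert p s.A) s.lt s.B s.C s.F with hr
  have hAsub : s.A ⊆ r.A := subset_insert p s.A
  -- key: incompatibility is preserved for elements of s.A
  have hinc : ∀ x ∈ s.A, ∀ y ∈ s.A, (r.Incomp x y ↔ s.Incomp x y) := by
    intro x hx y hy
    constructor
    · intro h ⟨z, hz, hzx, hzy⟩
      exact h ⟨z, hAsub hz, hzx, hzy⟩
    · intro h ⟨z, hz, hzx, hzy⟩
      rcases hz with hz | hz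
      · subst hz
        rcases hzx with hzx | hzx
        · exact h ⟨z, (h3 z x hzx).1, Or.inl hzx, hzy⟩
        · exact h ⟨x, hx, Or.inr rfl, hzx ▸ hzy⟩
      · exact h ⟨z, hz, hzx, hzy⟩
  have hcolfun : ∀ q : ColFun, IsColFun s.A q → IsColFun r.A q := by
    intro q ⟨hq1, hq2, hq3⟩
    exact ⟨hq1, hq2, fun a b hab => hAsub (hq3 a b hab)⟩
  have hcond : r.IsCond := by
    refine ⟨h1.insert p, ?_, ?_, h4, h5, h6, ?_, h8, ?_, h10, h11, ?_⟩
    · rintro a (rfl | ha)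
      · exact hp
      · exact h2 a ha
    · intro a b hab
      obtain ⟨ha, hb⟩ := h3 a b hab
      exact ⟨hAsub ha, hAsub hb⟩
    · intro pq hpq
      obtain ⟨hA, hC, hα⟩ := h7 pq hpq
      exact ⟨hAsub hA, hcolfun _ hC, hα⟩
    · intro a ha
      obtain ⟨hA, hdec, hnb⟩ := h9 a ha
      refine ⟨fun n => hAsub (hA n), hdec, ?_⟩
      rintro ⟨z, hz, hlb⟩
      rcases hz with rfl | hz
      · rcases hlb 0 with hlt | heq
        · exact hnb ⟨z, (h3 z (a 0) hlt).1, hlb⟩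
        · subst heq; exact hnb ⟨a 0, hA 0, hlb⟩
      · exact hnb ⟨z, hz, hlb⟩
    · intro a pq m hm p'q' hp'q' hle hsub hlt
      obtain ⟨k, hk⟩ := h12 a pq m hm p'q' hp'q' hle hsub hlt
      have ha := h10 (a, pq, m) hm
      have hp' := (h7 p'q' hp'q').1
      have hak := ((h9 a ha.1).1) k
      exact ⟨k, (hinc _ hp' _ hak).2 hk⟩
  have hext : Ext r s :=
    ⟨hAsub, fun a _ b _ => Iff.rfl, hinc, subset_rfl, subset_rfl, subset_rfl⟩
  exact ⟨⟨r, hcond, hext, mem_insert p s.A⟩, hcond, hext, mem_insert p s.A⟩
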